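/- Let X : [0,∞) × [-1,1]² → ℝ be a C² function (i.e., the restriction of a C² function defined on an open neighborhood of [0,∞) × [-1,1]²), and define A(h) := sup_{t ≥ 0} X(t,h) for h ∈ (-1,1)². Assume: (i) there exists a unique T₀ ∈ [0,∞) such that A(0) = X(T₀,0) > 0; (ii) if T₀ > 0 then ∂²X/∂t²(T₀,0) ≠ 0, while if T₀ = 0 then ∂X/∂t(0,0) ≠ 0; (iii) for every ε > 0 there exists C > 0 such that |X(t,u)| ≤ ε for all u ∈ [-1,1]² and all t ≥ C. Then there exist an open subset V ⊆ (-1,1)² containing 0 and a C¹ map T : V → [0,∞) such that A(h) = X(T(h),h) for every h ∈ V; moreover, the map h ↦ A(h) is differentiable at h = 0 and ∇A(0) = ∇ₕX(T₀,0), where ∇ₕX denotes the gradient of X in the h-variables. -/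

import Mathlib

open Set Filter

private lemma hasDerivAt_slice' {f : ℝ × (ℝ × ℝ) → ℝ} {t : ℝ} {h : ℝ × ℝ}
    (hdiff : DifferentiableAt ℝ f (t, h)) :
    HasDerivAt (fun s => f (s, h)) (fderiv ℝ f (t, h) (1, 0)) t := by
  have hline : HasDerivAt (fun s : ℝ => ((s, h) : ℝ × (ℝ × ℝ))) (1, 0) t :=
    (hasDerivAt_id t).prodMk (hasDerivAt_const t h)
  exact hdiff.hasFDerivAt.comp_hasDerivAt t hline

private lemma G_contDiffOn' {X : ℝ × (ℝ × ℝ) → ℝ} {O : Set (ℝ × (ℝ × ℝ))}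
    (hO : IsOpen O) (hX : ContDiffOn ℝ 2 X O) :
    ContDiffOn ℝ 1 (fun p => fderiv ℝ X p (1, 0)) O := by
  have h1 : ContDiffOn ℝ 1 (fderiv ℝ X) O := hX.fderiv_of_isOpen hO (by norm_num)
  exact (ContinuousLinearMap.apply ℝ ℝ ((1:ℝ), (0:ℝ×ℝ))).contDiff.comp_contDiffOn h1

private lemma hasFDerivAt_sliceH' {X : ℝ × (ℝ × ℝ) → ℝ} {t : ℝ} {u : ℝ × ℝ}
    (hdiff : DifferentiableAt ℝ X (t, u)) :
    HasFDerivAt (fun v => X (t, v))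
      ((fderiv ℝ X (t, u)).comp (ContinuousLinearMap.inr ℝ ℝ (ℝ × ℝ))) u :=
  hdiff.hasFDerivAt.comp u (hasFDerivAt_prodMk_right t u)

private lemma H_continuousOn' {X : ℝ × (ℝ × ℝ) → ℝ} {O : Set (ℝ × (ℝ × ℝ))}
    (hO : IsOpen O) (hX : ContDiffOn ℝ 2 X O) :
    ContinuousOn (fun p => (fderiv ℝ X p).comp (ContinuousLinearMap.inr ℝ ℝ (ℝ × ℝ))) O := by
  have h1 : ContinuousOn (fderiv ℝ X) O :=
    hX.continuousOn_fderiv_of_isOpen hO (by norm_num)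
  exact ((ContinuousLinearMap.compL ℝ (ℝ × ℝ) (ℝ × (ℝ × ℝ)) ℝ).flip
    (ContinuousLinearMap.inr ℝ ℝ (ℝ × ℝ))).continuous.comp_continuousOn h1

private lemma right_deriv_neg' {f : ℝ → ℝ} {d : ℝ}
    (hmax : ∀ t, 0 ≤ t → f t ≤ f 0)
    (hd : HasDerivAt f d 0) (hne : d ≠ 0) : d < 0 := by
  rcases hne.lt_or_gt with h | h
  · exact h
  exfalso
  have hs := hasDerivAt_iff_tendsto_slope.1 hd
  have hs' : Tendsto (slope f 0) (nhdsWithin 0 (Ioi 0)) (nhds d) :=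
    hs.mono_left (nhdsWithin_mono _ (fun x hx => ne_of_gt hx))
  have hle : d ≤ 0 := by
    refine le_of_tendsto hs' ?_
    filter_upwards [self_mem_nhdsWithin] with t ht
    have : f t ≤ f 0 := hmax t (le_of_lt ht)
    have ht0 : (0:ℝ) < t := ht
    rw [slope_def_field, sub_zero]
    have hfd : f t - f 0 ≤ 0 := by linarith
    exact div_nonpos_of_nonpos_of_nonneg hfd ht0.le
  linarith

private lemma deriv2_neg' {f : ℝ → ℝ} {T₀ a : ℝ}
    (hmax : ∀ t, T₀ ≤ t → f t ≤ f T₀)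
    (hcont : ∀ᶠ t in nhds T₀, ContinuousAt f t)
    (hg0 : deriv f T₀ = 0)
    (hga : HasDerivAt (deriv f) a T₀) (ha : a ≠ 0) : a < 0 := by
  rcases ha.lt_or_gt with h | h
  · exact h
  exfalso
  have hs := hasDerivAt_iff_tendsto_slope.1 hga
  have hev : ∀ᶠ t in nhdsWithin T₀ {T₀}ᶜ, 0 < slope (deriv f) T₀ t :=
    hs.eventually (eventually_gt_nhds h)
  rw [eventually_nhdsWithin_iff] at hev
  obtain ⟨η, hη, hball⟩ := Metric.eventually_nhds_iff.1 (hev.and hcont)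
  have hderiv_pos : ∀ t ∈ Ioo T₀ (T₀ + η), 0 < deriv f t := by
    intro t ⟨ht1, ht2⟩
    have hd : dist t T₀ < η := by
      rw [Real.dist_eq, abs_of_pos (by linarith)]; linarith
    have := (hball hd).1 (by simp [ne_of_gt ht1])
    rw [slope_def_field, hg0, sub_zero] at this
    have htpos : 0 < t - T₀ := by linarith
    calc (0:ℝ) = (deriv f t / (t - T₀)) * 0 := by ring
    _ < (deriv f t / (t - T₀)) * (t - T₀) := by
        apply mul_lt_mul_of_pos_left htpos this
    _ = deriv f t := by field_simp
  have hmono : StrictMonoOn f (Ico T₀ (T₀ + η)) := by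
    apply strictMonoOn_of_deriv_pos (convex_Ico _ _)
    · intro t ht
      rcases eq_or_lt_of_le ht.1 with rfl | hlt
      · exact ((hball (by simpa using hη)).2).continuousWithinAt
      · have hd : dist t T₀ < η := by
          rw [Real.dist_eq, abs_of_pos (by linarith [ht.2])]; linarith [ht.2]
        exact ((hball hd).2).continuousWithinAt
    · intro t ht
      rw [interior_Ico] at ht
      exact hderiv_pos t ht
  have h1 : T₀ ∈ Ico T₀ (T₀ + η) := by constructor <;> [rfl; linarith]
  have h2 : T₀ + η / 2 ∈ Ico T₀ (T₀ + η) := by constructor <;> linarith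
  have := hmono h1 h2 (by linarith)
  have := hmax (T₀ + η / 2) (by linarith)
  linarith

private lemma ift_T' {G : ℝ × (ℝ × ℝ) → ℝ} {O : Set (ℝ × (ℝ × ℝ))} (hO : IsOpen O)
    (hG : ContDiffOn ℝ 1 G O)
    {T₀ : ℝ} (hmem : ((T₀ : ℝ), (0:ℝ×ℝ)) ∈ O) (hG0 : G (T₀, 0) = 0)
    (ha : fderiv ℝ G (T₀, 0) (1, 0) ≠ 0) :
    ∃ T : ℝ × ℝ → ℝ, ContDiffAt ℝ 1 T 0 ∧ T 0 = T₀ ∧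
      ∀ᶠ h in nhds (0:ℝ×ℝ), G (T h, h) = 0 := by
  set a := fderiv ℝ G (T₀, 0) (1, 0) with ha_def
  have hGd : ContDiffAt ℝ 1 G (T₀, 0) := hG.contDiffAt (hO.mem_nhds hmem)
  have hgd : HasFDerivAt G (fderiv ℝ G (T₀, 0)) (T₀, 0) :=
    (hGd.differentiableAt one_ne_zero).hasFDerivAt
  set gd := fderiv ℝ G (T₀, 0) with hgd_def
  set Φ : ℝ × (ℝ × ℝ) → ℝ × (ℝ × ℝ) := fun p => (G p, p.2) with hΦ_def
  have hΦ : ContDiffAt ℝ 1 Φ (T₀, 0) := hGd.prodMk contDiffAt_snd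
  have key : ∀ (t : ℝ) (h : ℝ × ℝ), gd (t, h) = t * a + gd (0, h) := by
    intro t h
    have : ((t : ℝ), h) = t • ((1:ℝ), (0:ℝ×ℝ)) + ((0:ℝ), h) := by
      simp [Prod.ext_iff]
    rw [this, map_add, map_smul, smul_eq_mul]
  set i : ℝ × (ℝ × ℝ) →L[ℝ] ℝ × (ℝ × ℝ) :=
    ((a⁻¹) • (ContinuousLinearMap.fst ℝ ℝ (ℝ×ℝ) -
      gd.comp ((ContinuousLinearMap.inr ℝ ℝ (ℝ×ℝ)).comp
        (ContinuousLinearMap.snd ℝ ℝ (ℝ×ℝ))))).prod (ContinuousLinearMap.snd ℝ ℝ (ℝ×ℝ))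
    with hi_def
  set D : ℝ × (ℝ × ℝ) →L[ℝ] ℝ × (ℝ × ℝ) :=
    gd.prod (ContinuousLinearMap.snd ℝ ℝ (ℝ×ℝ)) with hD_def
  have h₁ : Function.LeftInverse i D := by
    rintro ⟨t, h⟩
    simp [hi_def, hD_def, key t h]
    field_simp
  have h₂ : Function.RightInverse i D := by
    rintro ⟨s, v⟩
    simp [hi_def, hD_def]
    rw [key]
    field_simp
    ring
  set e := ContinuousLinearEquiv.equivOfInverse D i h₁ h₂ with he_def
  have hΦd : HasFDerivAt Φ (e : ℝ × (ℝ × ℝ) →L[ℝ] ℝ × (ℝ × ℝ)) (T₀, 0) := by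
    have : HasFDerivAt Φ D (T₀, 0) := hgd.prodMk (hasFDerivAt_snd)
    convert this using 1
    rfl
  have hΦ00 : Φ (T₀, 0) = ((0:ℝ), (0:ℝ×ℝ)) := by simp [hΦ_def, hG0]
  set inv := hΦ.localInverse hΦd one_ne_zero with hinv_def
  have hinv_cd : ContDiffAt ℝ 1 inv (Φ (T₀, 0)) := hΦ.to_localInverse hΦd one_ne_zero
  have hri : ∀ᶠ y in nhds (Φ (T₀, 0)), Φ (inv y) = y :=
    (hΦ.hasStrictFDerivAt' hΦd one_ne_zero).eventually_right_inverse
  have himg : inv (Φ (T₀, 0)) = (T₀, 0) := hΦ.localInverse_apply_image hΦd one_ne_zero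
  refine ⟨fun h => (inv (0, h)).1, ?_, ?_, ?_⟩
  · have h0 : ContDiffAt ℝ 1 (fun h : ℝ × ℝ => inv ((0:ℝ), h)) 0 := by
      have hline : ContDiffAt ℝ 1 (fun h : ℝ × ℝ => (((0:ℝ), h) : ℝ × (ℝ × ℝ))) 0 :=
        (contDiff_const.prodMk contDiff_id).contDiffAt
      have := hinv_cd
      rw [hΦ00] at this
      exact this.comp 0 hline
    exact contDiffAt_fst.comp 0 h0
  · show (inv ((0:ℝ), (0:ℝ×ℝ))).1 = T₀
    rw [hΦ00] at himg
    rw [himg]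
  · have htend : Filter.Tendsto (fun h : ℝ × ℝ => (((0:ℝ), h) : ℝ × (ℝ × ℝ)))
        (nhds 0) (nhds (Φ (T₀, 0))) := by
      rw [hΦ00]
      exact (continuous_const.prodMk continuous_id).tendsto' 0 _ rfl
    filter_upwards [htend.eventually hri] with h hh
    have h2 : (inv ((0:ℝ), h)).2 = h := congrArg Prod.snd hh
    have h1 : G (inv ((0:ℝ), h)) = 0 := congrArg Prod.fst hh
    have heq : ((inv ((0:ℝ), h)).1, h) = inv ((0:ℝ), h) := Prod.ext_iff.mpr ⟨rfl, h2.symm⟩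
    show G ((inv ((0:ℝ), h)).1, h) = 0
    rw [heq]
    exact h1

theorem max_tracking
    (X : ℝ × (ℝ × ℝ) → ℝ) (O : Set (ℝ × (ℝ × ℝ)))
    (hO : IsOpen O)
    (hdom : (Ici (0:ℝ)) ×ˢ ((Icc (-1:ℝ) 1) ×ˢ (Icc (-1:ℝ) 1)) ⊆ O)
    (hX : ContDiffOn ℝ 2 X O)
    (A : ℝ × ℝ → ℝ)
    (hA : ∀ h : ℝ × ℝ, A h = ⨆ t : Ici (0:ℝ), X (↑t, h))
    (T₀ : ℝ) (hT₀ : 0 ≤ T₀)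
    (hmax : A 0 = X (T₀, 0))
    (hpos : 0 < X (T₀, 0))
    (huniq : ∀ t : ℝ, 0 ≤ t → A 0 = X (t, 0) → t = T₀)
    (hnd1 : 0 < T₀ → deriv (deriv (fun t : ℝ => X (t, 0))) T₀ ≠ 0)
    (hnd2 : T₀ = 0 → deriv (fun t : ℝ => X (t, 0)) 0 ≠ 0)
    (hdecay : ∀ ε > (0:ℝ), ∃ C > (0:ℝ), ∀ u ∈ (Icc (-1:ℝ) 1) ×ˢ (Icc (-1:ℝ) 1),
      ∀ t ≥ C, |X (t, u)| ≤ ε) :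
    ∃ V : Set (ℝ × ℝ), IsOpen V ∧ (0:ℝ × ℝ) ∈ V ∧
      V ⊆ (Ioo (-1:ℝ) 1) ×ˢ (Ioo (-1:ℝ) 1) ∧
      (∃ T : ℝ × ℝ → ℝ, ContDiffOn ℝ 1 T V ∧
        ∀ h ∈ V, 0 ≤ T h ∧ A h = X (T h, h)) ∧
      HasFDerivAt A (fderiv ℝ (fun h : ℝ × ℝ => X (T₀, h)) 0) 0 := by
  haveI : Nonempty (Ici (0:ℝ)) := ⟨⟨0, Set.self_mem_Ici⟩⟩
  set Icc2 : Set (ℝ × ℝ) := (Icc (-1:ℝ) 1) ×ˢ (Icc (-1:ℝ) 1) with hIcc2_def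
  have h0Icc2 : (0:ℝ×ℝ) ∈ Icc2 := by
    constructor <;> constructor <;> norm_num
  have h0Ioo2 : (0:ℝ×ℝ) ∈ (Ioo (-1:ℝ) 1) ×ˢ (Ioo (-1:ℝ) 1) := by
    constructor <;> constructor <;> norm_num
  have hIoosub : (Ioo (-1:ℝ) 1) ×ˢ (Ioo (-1:ℝ) 1) ⊆ Icc2 :=
    prod_mono Ioo_subset_Icc_self Ioo_subset_Icc_self
  have hmemO : ∀ (t : ℝ) (h : ℝ × ℝ), 0 ≤ t → h ∈ Icc2 → (t, h) ∈ O :=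
    fun t h ht hh => hdom ⟨ht, hh⟩
  set G : ℝ × (ℝ × ℝ) → ℝ := fun p => fderiv ℝ X p (1, 0) with hG_def
  have hGC1 : ContDiffOn ℝ 1 G O := G_contDiffOn' hO hX
  have hGcont : ContinuousOn G O := hGC1.continuousOn
  have hXcont : ContinuousOn X O := hX.continuousOn
  have hXdiffAt : ∀ p ∈ O, DifferentiableAt ℝ X p := fun p hp =>
    (hX.contDiffAt (hO.mem_nhds hp)).differentiableAt (by norm_num)
  -- decay constants
  obtain ⟨C₀, hC₀pos, hC₀⟩ := hdecay (X (T₀,0)/3) (by linarith)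
  set C := max C₀ (T₀+1) with hC_def
  have hC0le : C₀ ≤ C := le_max_left _ _
  have hCT₀ : T₀ + 1 ≤ C := le_max_right _ _
  have hCpos : 0 < C := lt_of_lt_of_le hC₀pos hC0le
  set K := Icc (0:ℝ) C ×ˢ Icc2 with hK_def
  have hKcomp : IsCompact K := isCompact_Icc.prod (isCompact_Icc.prod isCompact_Icc)
  have hKO : K ⊆ O := fun p hp => hdom ⟨hp.1.1, hp.2⟩
  obtain ⟨pM, hpM, hM⟩ := hKcomp.exists_isMaxOn ⟨(0, 0), ⟨⟨le_rfl, hCpos.le⟩, h0Icc2⟩⟩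
    (hXcont.mono hKO)
  rw [isMaxOn_iff] at hM
  set B := max (X pM) (X (T₀,0)/3) with hB_def
  have hBdd : ∀ h ∈ Icc2, ∀ t, 0 ≤ t → X (t, h) ≤ B := by
    intro h hh t ht
    by_cases htC : t ≤ C
    · exact le_trans (hM (t, h) ⟨⟨ht, htC⟩, hh⟩) (le_max_left _ _)
    · push_neg at htC
      refine le_trans (le_trans (le_abs_self _)
        (hC₀ h hh t (le_trans hC0le htC.le))) (le_max_right _ _)
  have hbddAbove : ∀ h ∈ Icc2, BddAbove (range fun t : Ici (0:ℝ) => X (↑t, h)) := by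
    intro h hh
    exact ⟨B, forall_mem_range.2 fun t => hBdd h hh t t.2⟩
  have hle : ∀ h ∈ Icc2, ∀ t, 0 ≤ t → X (t, h) ≤ A h := by
    intro h hh t ht
    rw [hA h]
    exact le_ciSup (hbddAbove h hh) ⟨t, ht⟩
  have hsup_le : ∀ h ∈ Icc2, ∀ y : ℝ, (∀ t, 0 ≤ t → X (t, h) ≤ y) → A h ≤ y := by
    intro h hh y hy
    rw [hA h]
    exact ciSup_le fun t => hy t t.2
  have hA0 : ∀ t, 0 ≤ t → X (t, 0) ≤ A 0 := hle 0 h0Icc2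
  -- gap lemma
  have hgap : ∀ δ : ℝ, 0 < δ → δ ≤ 1 → ∃ W ∈ nhds (0:ℝ×ℝ), ∀ h ∈ W, h ∈ Icc2 →
      ∀ t, 0 ≤ t → t ∉ Ioo (T₀ - δ) (T₀ + δ) → X (t, h) < X (T₀, h) := by
    intro δ hδpos hδ1
    set S := Icc (0:ℝ) C ∩ (Ioo (T₀ - δ) (T₀ + δ))ᶜ with hS_def
    have hScomp : IsCompact S := isCompact_Icc.inter_right isOpen_Ioo.isClosed_compl
    have hCS : C ∈ S := by
      refine ⟨⟨hCpos.le, le_rfl⟩, ?_⟩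
      intro hmem
      have := hmem.2
      linarith
    have hmapsto : ∀ t ∈ S, ((t : ℝ), (0:ℝ×ℝ)) ∈ O := fun t ht => hmemO t 0 ht.1.1 h0Icc2
    have hcontS : ContinuousOn (fun t : ℝ => X (t, 0)) S := by
      apply hXcont.comp (Continuous.continuousOn (continuous_id.prodMk continuous_const))
      intro t ht
      exact hmapsto t ht
    obtain ⟨ts, htsS, hts⟩ := hScomp.exists_isMaxOn ⟨C, hCS⟩ hcontS
    rw [isMaxOn_iff] at hts
    have hmlt : X (ts, 0) < A 0 := by
      rcases lt_or_eq_of_le (hA0 ts htsS.1.1) with h | h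
      · exact h
      · exfalso
        have := huniq ts htsS.1.1 h.symm
        exact htsS.2 (by rw [this]; exact ⟨by linarith, by linarith⟩)
    set ℓ := max (X (ts, 0)) (X (T₀,0)/3) with hℓ_def
    have hℓlt : ℓ < A 0 := by
      apply max_lt hmlt
      rw [hmax]; linarith
    set ℓ' := (ℓ + A 0)/2 with hℓ'_def
    have hℓℓ' : ℓ < ℓ' := by rw [hℓ'_def]; linarith
    have hℓ'A : ℓ' < A 0 := by rw [hℓ'_def]; linarith
    set U := O ∩ X ⁻¹' (Iio ℓ') with hU_def
    have hUopen : IsOpen U := hXcont.isOpen_inter_preimage hO isOpen_Iio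
    have hSsub : S ×ˢ {(0:ℝ×ℝ)} ⊆ U := by
      rintro ⟨t, h⟩ ⟨htS, hh⟩
      rcases hh with rfl
      exact ⟨hmapsto t htS, lt_of_le_of_lt (le_trans (hts t htS) (le_max_left _ _)) hℓℓ'⟩
    obtain ⟨u, v, hu, hv, hSu, h0v, huv⟩ :=
      generalized_tube_lemma hScomp isCompact_singleton hUopen hSsub
    have hcontT₀ : ContinuousAt (fun h : ℝ × ℝ => X (T₀, h)) 0 := by
      have : ContinuousAt X (T₀, 0) := hXcont.continuousAt (hO.mem_nhds (hmemO T₀ 0 hT₀ h0Icc2))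
      exact this.comp ((continuous_const.prodMk continuous_id).continuousAt)
    have hW2 : ∀ᶠ h : ℝ × ℝ in nhds 0, ℓ' < X (T₀, h) := by
      have htend : Tendsto (fun h : ℝ × ℝ => X (T₀, h)) (nhds 0) (nhds (A 0)) := by
        have := hcontT₀.tendsto
        rwa [show X (T₀, (0:ℝ×ℝ)) = A 0 from hmax.symm] at this
      exact htend.eventually (eventually_gt_nhds hℓ'A)
    obtain ⟨w, hwmem, hw⟩ := eventually_iff_exists_mem.1 hW2
    refine ⟨v ∩ w, inter_mem (hv.mem_nhds (h0v rfl)) hwmem, ?_⟩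
    intro h hh hhIcc2 t ht htout
    by_cases htC : t ≤ C
    · have htS : t ∈ S := ⟨⟨ht, htC⟩, htout⟩
      have : (t, h) ∈ U := huv ⟨hSu htS, hh.1⟩
      exact lt_trans this.2 (hw h hh.2)
    · push_neg at htC
      have : |X (t, h)| ≤ X (T₀,0)/3 := hC₀ h hhIcc2 t (le_trans hC0le htC.le)
      have h1 : X (t, h) ≤ ℓ := le_trans (le_abs_self _) (le_trans this (le_max_right _ _))
      exact lt_of_le_of_lt (h1.trans hℓℓ'.le) (hw h hh.2)
  -- produce the tracking map T
  obtain ⟨T, hTC1loc, hTtendsto, hTev⟩ :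
      ∃ T : ℝ × ℝ → ℝ, (∃ u ∈ nhds (0:ℝ×ℝ), ContDiffOn ℝ 1 T u) ∧
        Tendsto T (nhds 0) (nhds T₀) ∧
        (∀ᶠ h : ℝ × ℝ in nhds 0, h ∈ Icc2 → (0 ≤ T h ∧ A h = X (T h, h))) := by
    rcases eq_or_lt_of_le hT₀ with hT0eq | hT0pos
    · -- Case T₀ = 0
      have hmem00 : ((0:ℝ), (0:ℝ×ℝ)) ∈ O := hmemO 0 0 le_rfl h0Icc2
      have hder : HasDerivAt (fun t : ℝ => X (t, 0)) (G (0, 0)) 0 :=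
        hasDerivAt_slice' (hXdiffAt _ hmem00)
      have hdne : G ((0:ℝ), (0:ℝ×ℝ)) ≠ 0 := hder.deriv ▸ hnd2 hT0eq.symm
      have hmax0 : ∀ t, 0 ≤ t → X (t, (0:ℝ×ℝ)) ≤ X ((0:ℝ), (0:ℝ×ℝ)) := by
        intro t ht
        have := hA0 t ht
        rwa [hmax, ← hT0eq] at this
      have hdneg : G ((0:ℝ), (0:ℝ×ℝ)) < 0 := right_deriv_neg' hmax0 hder hdne
      have hGopen : IsOpen (O ∩ G ⁻¹' (Iio 0)) := hGcont.isOpen_inter_preimage hO isOpen_Iio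
      obtain ⟨r, hrpos, hrball⟩ := Metric.isOpen_iff.1 hGopen _ ⟨hmem00, hdneg⟩
      set δ := min (r/2) 1 with hδ_def
      have hδpos : 0 < δ := lt_min (by linarith) one_pos
      have hδ1 : δ ≤ 1 := min_le_right _ _
      have hδr : δ ≤ r/2 := min_le_left _ _
      obtain ⟨W, hWmem, hW⟩ := hgap δ hδpos hδ1
      refine ⟨fun _ => 0, ⟨univ, univ_mem, contDiffOn_const⟩,
        by rw [← hT0eq]; exact tendsto_const_nhds, ?_⟩
      filter_upwards [(hWmem : ∀ᶠ h : ℝ × ℝ in nhds 0, h ∈ W),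
        Metric.ball_mem_nhds (0:ℝ×ℝ) (show (0:ℝ) < r/2 by linarith)] with h hhW hhball hhIcc
      refine ⟨le_rfl, ?_⟩
      have hballO : ∀ s ∈ Icc (0:ℝ) δ, ((s:ℝ), h) ∈ O ∩ G ⁻¹' (Iio 0) := by
        intro s hs
        apply hrball
        rw [Metric.mem_ball, Prod.dist_eq]
        apply max_lt
        · rw [Real.dist_eq, sub_zero, abs_of_nonneg hs.1]; linarith [hs.2]
        · have := Metric.mem_ball.1 hhball; linarith
      have hanti : AntitoneOn (fun s => X (s, h)) (Icc 0 δ) := by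
        apply antitoneOn_of_deriv_nonpos (convex_Icc _ _)
        · apply hXcont.comp (Continuous.continuousOn (continuous_id.prodMk continuous_const))
          intro s hs; exact (hballO s hs).1
        · intro s hs
          rw [interior_Icc] at hs
          exact (hasDerivAt_slice' (hXdiffAt _
            (hballO s (Ioo_subset_Icc_self hs)).1)).differentiableAt.differentiableWithinAt
        · intro s hs
          rw [interior_Icc] at hs
          rw [(hasDerivAt_slice' (hXdiffAt _ (hballO s (Ioo_subset_Icc_self hs)).1)).deriv]
          exact le_of_lt (hballO s (Ioo_subset_Icc_self hs)).2
      have hclaim : ∀ t, 0 ≤ t → X (t, h) ≤ X ((0:ℝ), h) := by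
        intro t ht
        by_cases htδ : t ≤ δ
        · exact hanti ⟨le_rfl, hδpos.le⟩ ⟨ht, htδ⟩ ht
        · push_neg at htδ
          have hnot : t ∉ Ioo (T₀ - δ) (T₀ + δ) := by
            rw [← hT0eq]; rintro ⟨-, h2⟩; rw [zero_add] at h2; linarith
          have hlt := hW h hhW hhIcc t ht hnot
          rw [← hT0eq] at hlt
          exact hlt.le
      exact le_antisymm (hsup_le h hhIcc _ hclaim) (hle h hhIcc 0 le_rfl)
    · -- Case T₀ > 0
      have hmemT₀ : ((T₀:ℝ), (0:ℝ×ℝ)) ∈ O := hmemO T₀ 0 hT₀ h0Icc2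
      have hφd : HasDerivAt (fun t : ℝ => X (t, 0)) (G (T₀, 0)) T₀ :=
        hasDerivAt_slice' (hXdiffAt _ hmemT₀)
      have hlocmax : IsLocalMax (fun t : ℝ => X (t, 0)) T₀ := by
        filter_upwards [eventually_gt_nhds hT0pos] with t ht
        have := hA0 t ht.le
        rwa [hmax] at this
      have hφ'0 : deriv (fun t : ℝ => X (t, 0)) T₀ = 0 :=
        hlocmax.deriv_eq_zero
      have hG0 : G (T₀, (0:ℝ×ℝ)) = 0 := by rw [← hφd.deriv]; exact hφ'0
      have hOline : ∀ᶠ t : ℝ in nhds T₀, ((t:ℝ), (0:ℝ×ℝ)) ∈ O := by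
        have hc : Continuous (fun t : ℝ => ((t, 0) : ℝ × (ℝ × ℝ))) :=
          continuous_id.prodMk continuous_const
        exact hc.continuousAt.eventually_mem (hO.mem_nhds hmemT₀)
      have hGband : (fun t : ℝ => deriv (fun s : ℝ => X (s, 0)) t) =ᶠ[nhds T₀]
          fun t => G (t, 0) := by
        filter_upwards [hOline] with t htO
        exact (hasDerivAt_slice' (hXdiffAt _ htO)).deriv
      have hGline : HasDerivAt (fun t : ℝ => G (t, 0)) (fderiv ℝ G (T₀, 0) (1, 0)) T₀ :=
        hasDerivAt_slice' ((hGC1.contDiffAt (hO.mem_nhds hmemT₀)).differentiableAt one_ne_zero)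
      set a := fderiv ℝ G (T₀, 0) (1, 0) with ha_def
      have hderiv2 : HasDerivAt (deriv (fun t : ℝ => X (t, 0))) a T₀ :=
        hGline.congr_of_eventuallyEq hGband
      have ha_ne : a ≠ 0 := by
        have h2 : deriv (deriv (fun t : ℝ => X (t, 0))) T₀ = a := hderiv2.deriv
        rw [← h2]; exact hnd1 hT0pos
      have hmaxright : ∀ t, T₀ ≤ t → X (t, (0:ℝ×ℝ)) ≤ X (T₀, (0:ℝ×ℝ)) := by
        intro t ht
        rw [← hmax]; exact hA0 t (le_trans hT₀ ht)
      have hcontev : ∀ᶠ t in nhds T₀, ContinuousAt (fun s : ℝ => X (s, 0)) t := by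
        filter_upwards [hOline] with t htO
        exact ContinuousAt.comp (hXcont.continuousAt (hO.mem_nhds htO))
          ((continuous_id.prodMk continuous_const :
            Continuous fun s : ℝ => ((s, (0:ℝ×ℝ)) : ℝ × (ℝ × ℝ))).continuousAt)
      have ha_neg : a < 0 := deriv2_neg' hmaxright hcontev hφ'0 hderiv2 ha_ne
      obtain ⟨T, hTC1at, hT0val, hTzero⟩ := ift_T' hO hGC1 hmemT₀ hG0 ha_ne
      have hTtendsto : Tendsto T (nhds 0) (nhds T₀) := by
        have := hTC1at.continuousAt.tendsto
        rwa [hT0val] at this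
      have hGt_cont : ContinuousOn (fun p => fderiv ℝ G p (1, 0)) O := by
        have h1 : ContinuousOn (fderiv ℝ G) O := hGC1.continuousOn_fderiv_of_isOpen hO le_rfl
        exact (ContinuousLinearMap.apply ℝ ℝ ((1:ℝ), (0:ℝ×ℝ))).continuous.comp_continuousOn h1
      have hregion : IsOpen (O ∩ (fun p => fderiv ℝ G p (1, 0)) ⁻¹' (Iio 0)) :=
        hGt_cont.isOpen_inter_preimage hO isOpen_Iio
      obtain ⟨r₁, hr₁pos, hr₁ball⟩ := Metric.isOpen_iff.1 hregion _ ⟨hmemT₀, ha_neg⟩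
      set δ := min (min (r₁/2) 1) T₀ with hδ_def
      have hδpos : 0 < δ := lt_min (lt_min (by linarith) one_pos) hT0pos
      have hδ1 : δ ≤ 1 := le_trans (min_le_left _ _) (min_le_right _ _)
      have hδr : δ ≤ r₁/2 := le_trans (min_le_left _ _) (min_le_left _ _)
      have hδT₀ : δ ≤ T₀ := min_le_right _ _
      obtain ⟨W, hWmem, hW⟩ := hgap δ hδpos hδ1
      refine ⟨T, hTC1at.contDiffOn le_rfl (by simp), hTtendsto, ?_⟩
      have hTwin : ∀ᶠ h : ℝ × ℝ in nhds 0, T h ∈ Ioo (T₀ - δ) (T₀ + δ) :=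
        hTtendsto.eventually (Filter.eventually_of_mem
          (Ioo_mem_nhds (by linarith) (by linarith)) (fun x hx => hx))
      filter_upwards [(hWmem : ∀ᶠ h : ℝ × ℝ in nhds 0, h ∈ W), hTzero, hTwin,
        Metric.ball_mem_nhds (0:ℝ×ℝ) (show (0:ℝ) < r₁/2 by linarith)]
        with h hhW hhG hhwin hhball hhIcc
      have hτpos : 0 ≤ T h := by have := hhwin.1; linarith
      refine ⟨hτpos, ?_⟩
      have hballO : ∀ s ∈ Icc (T₀ - δ) (T₀ + δ),
          ((s:ℝ), h) ∈ O ∩ (fun p => fderiv ℝ G p (1, 0)) ⁻¹' (Iio 0) := by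
        intro s hs
        apply hr₁ball
        rw [Metric.mem_ball, Prod.dist_eq]
        apply max_lt
        · rw [Real.dist_eq]
          have habs : |s - T₀| ≤ δ := abs_le.2 ⟨by linarith [hs.1], by linarith [hs.2]⟩
          linarith
        · have := Metric.mem_ball.1 hhball; linarith
      have hganti : StrictAntiOn (fun s => G (s, h)) (Icc (T₀ - δ) (T₀ + δ)) := by
        apply strictAntiOn_of_deriv_neg (convex_Icc _ _)
        · apply hGcont.comp (Continuous.continuousOn (continuous_id.prodMk continuous_const))
          intro s hs; exact (hballO s hs).1
        · intro s hs
          rw [interior_Icc] at hs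
          rw [(hasDerivAt_slice' ((hGC1.contDiffAt (hO.mem_nhds
            (hballO s (Ioo_subset_Icc_self hs)).1)).differentiableAt one_ne_zero)).deriv]
          exact (hballO s (Ioo_subset_Icc_self hs)).2
      have hτmem : T h ∈ Icc (T₀ - δ) (T₀ + δ) := Ioo_subset_Icc_self hhwin
      have hsub1 : Icc (T₀ - δ) (T h) ⊆ Icc (T₀ - δ) (T₀ + δ) :=
        Icc_subset_Icc le_rfl hτmem.2
      have hsub2 : Icc (T h) (T₀ + δ) ⊆ Icc (T₀ - δ) (T₀ + δ) :=
        Icc_subset_Icc hτmem.1 le_rfl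
      have hcontX : ∀ s : Set ℝ, s ⊆ Icc (T₀ - δ) (T₀ + δ) →
          ContinuousOn (fun t : ℝ => X (t, h)) s := by
        intro s hssub
        apply hXcont.comp (Continuous.continuousOn (continuous_id.prodMk continuous_const))
        intro t ht; exact (hballO t (hssub ht)).1
      have hdiffX : ∀ t ∈ Ioo (T₀ - δ) (T₀ + δ),
          HasDerivAt (fun s : ℝ => X (s, h)) (G (t, h)) t := fun t ht =>
        hasDerivAt_slice' (hXdiffAt _ (hballO t (Ioo_subset_Icc_self ht)).1)
      have hmono1 : MonotoneOn (fun s => X (s, h)) (Icc (T₀ - δ) (T h)) := by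
        apply monotoneOn_of_deriv_nonneg (convex_Icc _ _) (hcontX _ hsub1)
        · intro s hs
          rw [interior_Icc] at hs
          have hsm : s ∈ Ioo (T₀ - δ) (T₀ + δ) := ⟨hs.1, lt_of_lt_of_le hs.2 hτmem.2⟩
          exact (hdiffX s hsm).differentiableAt.differentiableWithinAt
        · intro s hs
          rw [interior_Icc] at hs
          have hsm : s ∈ Ioo (T₀ - δ) (T₀ + δ) := ⟨hs.1, lt_of_lt_of_le hs.2 hτmem.2⟩
          rw [(hdiffX s hsm).deriv]
          have hgt : G (T h, h) < G (s, h) := hganti (Ioo_subset_Icc_self hsm) hτmem hs.2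
          rw [hhG] at hgt
          exact hgt.le
      have hmono2 : AntitoneOn (fun s => X (s, h)) (Icc (T h) (T₀ + δ)) := by
        apply antitoneOn_of_deriv_nonpos (convex_Icc _ _) (hcontX _ hsub2)
        · intro s hs
          rw [interior_Icc] at hs
          have hsm : s ∈ Ioo (T₀ - δ) (T₀ + δ) := ⟨lt_of_le_of_lt hτmem.1 hs.1, hs.2⟩
          exact (hdiffX s hsm).differentiableAt.differentiableWithinAt
        · intro s hs
          rw [interior_Icc] at hs
          have hsm : s ∈ Ioo (T₀ - δ) (T₀ + δ) := ⟨lt_of_le_of_lt hτmem.1 hs.1, hs.2⟩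
          rw [(hdiffX s hsm).deriv]
          have hgt : G (s, h) < G (T h, h) := hganti hτmem (Ioo_subset_Icc_self hsm) hs.1
          rw [hhG] at hgt
          exact hgt.le
      have hT₀mem : T₀ ∈ Icc (T₀ - δ) (T₀ + δ) := ⟨by linarith, by linarith⟩
      have hXT₀τ : X (T₀, h) ≤ X (T h, h) := by
        rcases le_total T₀ (T h) with hcase | hcase
        · exact hmono1 ⟨hT₀mem.1, hcase⟩ ⟨hτmem.1, le_rfl⟩ hcase
        · exact hmono2 ⟨le_rfl, hτmem.2⟩ ⟨hcase, hT₀mem.2⟩ hcase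
      have hclaim : ∀ t, 0 ≤ t → X (t, h) ≤ X (T h, h) := by
        intro t ht
        by_cases htw : t ∈ Ioo (T₀ - δ) (T₀ + δ)
        · rcases le_total t (T h) with hcase | hcase
          · exact hmono1 ⟨htw.1.le, hcase⟩ ⟨hτmem.1, le_rfl⟩ hcase
          · exact hmono2 ⟨le_rfl, hτmem.2⟩ ⟨hcase, htw.2.le⟩ hcase
        · exact le_trans (hW h hhW hhIcc t ht htw).le hXT₀τ
      exact le_antisymm (hsup_le h hhIcc _ hclaim) (hle h hhIcc (T h) hτpos)
  -- the h-derivative at 0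
  set H : ℝ × (ℝ × ℝ) → (ℝ × ℝ) →L[ℝ] ℝ :=
    fun p => (fderiv ℝ X p).comp (ContinuousLinearMap.inr ℝ ℝ (ℝ × ℝ)) with hH_def
  have hmemT₀ : ((T₀:ℝ), (0:ℝ×ℝ)) ∈ O := hmemO T₀ 0 hT₀ h0Icc2
  have hLd : HasFDerivAt (fun v : ℝ × ℝ => X (T₀, v)) (H ((T₀:ℝ), (0:ℝ×ℝ))) 0 :=
    hasFDerivAt_sliceH' (hXdiffAt _ hmemT₀)
  set L := fderiv ℝ (fun h : ℝ × ℝ => X (T₀, h)) 0 with hL_def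
  have hLH : L = H ((T₀:ℝ), (0:ℝ×ℝ)) := hLd.fderiv
  have hHcont : ContinuousAt H ((T₀:ℝ), (0:ℝ×ℝ)) :=
    (H_continuousOn' hO hX).continuousAt (hO.mem_nhds hmemT₀)
  have hfd : HasFDerivAt A L 0 := by
    rw [hasFDerivAt_iff_isLittleO_nhds_zero, Asymptotics.isLittleO_iff]
    intro ε hε
    have h4 : ∀ᶠ p in nhds ((T₀:ℝ), (0:ℝ×ℝ)), ‖H p - L‖ < ε := by
      have hcn : ContinuousAt (fun p => ‖H p - L‖) ((T₀:ℝ), (0:ℝ×ℝ)) :=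
        (hHcont.sub continuousAt_const).norm
      have hval : ‖H ((T₀:ℝ), (0:ℝ×ℝ)) - L‖ = 0 := by rw [hLH, sub_self, norm_zero]
      have h5 := hcn.tendsto
      rw [hval] at h5
      exact h5.eventually (eventually_lt_nhds hε)
    have hev1 : ∀ᶠ p : ℝ × (ℝ × ℝ) in nhds ((T₀:ℝ), (0:ℝ×ℝ)), p ∈ O ∧ ‖H p - L‖ < ε :=
      (Filter.eventually_of_mem (hO.mem_nhds hmemT₀) (fun x hx => hx)).and h4
    obtain ⟨ρ, hρpos, hρ⟩ := Metric.eventually_nhds_iff.1 hev1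
    have hTnear : ∀ᶠ h : ℝ × ℝ in nhds 0, |T h - T₀| < ρ/2 := by
      have := Metric.tendsto_nhds.1 hTtendsto (ρ/2) (by linarith)
      filter_upwards [this] with h hh
      rwa [Real.dist_eq] at hh
    filter_upwards [hTev, hTnear, Metric.ball_mem_nhds (0:ℝ×ℝ) (show (0:ℝ) < ρ/2 by linarith),
      Filter.eventually_of_mem ((isOpen_Ioo.prod isOpen_Ioo).mem_nhds h0Ioo2) (fun x hx => hx)]
      with h hhQ hhT hhball hhIoo
    have hhIcc : h ∈ Icc2 := hIoosub hhIoo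
    obtain ⟨hTh0, hAh⟩ := hhQ hhIcc
    have hbound : ∀ t₁ : ℝ, |t₁ - T₀| < ρ/2 → |X (t₁, h) - X (t₁, 0) - L h| ≤ ε * ‖h‖ := by
      intro t₁ ht₁
      have hmem : ∀ v ∈ Metric.ball (0:ℝ×ℝ) (ρ/2), ((t₁:ℝ), v) ∈ O ∧ ‖H (t₁, v) - L‖ < ε := by
        intro v hv
        apply hρ
        rw [Prod.dist_eq]
        apply max_lt
        · rw [Real.dist_eq]; linarith
        · have := Metric.mem_ball.1 hv
          rw [dist_zero_right] at this
          rw [dist_zero_right]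
          linarith
      have hmvt := (convex_ball (0:ℝ×ℝ) (ρ/2)).norm_image_sub_le_of_norm_hasFDerivWithin_le'
        (f := fun v : ℝ × ℝ => X (t₁, v)) (f' := fun v : ℝ × ℝ => H ((t₁:ℝ), v)) (φ := L) (C := ε)
        (fun v hv => (hasFDerivAt_sliceH' (hXdiffAt _ (hmem v hv).1)).hasFDerivWithinAt)
        (fun v hv => le_of_lt (hmem v hv).2)
        (Metric.mem_ball_self (by linarith)) hhball
      simpa [Real.norm_eq_abs] using hmvt
    have e₁ := hbound T₀ (by rw [sub_self, abs_zero]; linarith)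
    have e₂ := hbound (T h) hhT
    have low : X (T₀, h) ≤ A h := hle h hhIcc T₀ hT₀
    have up : X (T h, 0) ≤ A 0 := hA0 (T h) hTh0
    rw [show ((0:ℝ×ℝ) + h) = h from zero_add h]
    rw [Real.norm_eq_abs, abs_le]
    have he₁ := abs_le.1 e₁
    have he₂ := abs_le.1 e₂
    constructor
    · linarith [he₁.1, low, hmax]
    · linarith [he₂.2, up, hAh, hmax]
  obtain ⟨u, hu_mem, hTC1⟩ := hTC1loc
  refine ⟨interior {h : ℝ × ℝ | h ∈ Icc2 → (0 ≤ T h ∧ A h = X (T h, h))} ∩ interior u ∩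
    ((Ioo (-1:ℝ) 1) ×ˢ (Ioo (-1:ℝ) 1)), ?_, ?_, ?_, ⟨T, ?_, ?_⟩, hfd⟩
  · exact (isOpen_interior.inter isOpen_interior).inter (isOpen_Ioo.prod isOpen_Ioo)
  · exact ⟨⟨mem_interior_iff_mem_nhds.2 hTev, mem_interior_iff_mem_nhds.2 hu_mem⟩, h0Ioo2⟩
  · exact fun h hh => hh.2
  · exact hTC1.mono (fun h hh => interior_subset hh.1.2)
  · intro h hh
    exact interior_subset hh.1.1 (hIoosub hh.2)
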